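/- Let $m \geq 2$. Suppose $n_1 + n_2 + \cdots + n_k = 2m+2$ with $2 \leq k$, each $n_i \geq 1$, and each $n_i \leq 2m$. Then $(k!)^2 \cdot d_{n_1} \cdot d_{n_2} \cdots d_{n_k}$ divides $((2m+2)!)^2 \cdot d_{2m}$. -/

import Mathlib

/-- `d n = (2! ⋯ n!)^4 * (n+1)!` -/
def d (n : ℕ) : ℕ := (∏ k ∈ Finset.Icc 2 n, Nat.factorial k) ^ 4 * Nat.factorial (n + 1)

lemma dstep (a : ℕ) :
    d (a + 1) = d a * Nat.factorial (a + 1) ^ 3 * Nat.factorial (a + 2) := by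
  cases a with
  | zero => decide
  | succ b =>
      unfold d
      rw [Finset.prod_Icc_succ_top (by omega : 2 ≤ b + 1 + 1)]
      ring

lemma d_one : d 1 = 2 := by decide

lemma d_two : d 2 = 96 := by decide

lemma two_fac_dvd (a : ℕ) : 2 ∣ Nat.factorial (a + 2) := by
  have := Nat.factorial_dvd_factorial (show 2 ≤ a + 2 by omega)
  simpa [Nat.factorial] using this

lemma dvd_two (p q : ℕ) (hp : 1 ≤ p) (hq : 1 ≤ q) :
    d p * d q ∣ 2 * d (p + q - 1) := by
  induction p, hp using Nat.le_induction with
  | base =>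
      rw [d_one, show 1 + q - 1 = q by omega]
  | succ p hp ih =>
      set r := p + q - 1 with hr
      have hrq : p + q = r + 1 := by omega
      have h1 : p + 1 + q - 1 = r + 1 := by omega
      rw [h1, dstep r, dstep p]
      have hf1 : Nat.factorial (p + 1) ^ 3 ∣ Nat.factorial (r + 1) ^ 3 :=
        pow_dvd_pow_of_dvd (Nat.factorial_dvd_factorial (by omega)) 3
      have hf2 : Nat.factorial (p + 2) ∣ Nat.factorial (r + 2) :=
        Nat.factorial_dvd_factorial (by omega)
      calc d p * Nat.factorial (p + 1) ^ 3 * Nat.factorial (p + 2) * d q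
          = d p * d q * (Nat.factorial (p + 1) ^ 3 * Nat.factorial (p + 2)) := by ring
        _ ∣ 2 * d r * (Nat.factorial (r + 1) ^ 3 * Nat.factorial (r + 2)) :=
            mul_dvd_mul ih (mul_dvd_mul hf1 hf2)
        _ = 2 * (d r * Nat.factorial (r + 1) ^ 3 * Nat.factorial (r + 2)) := by ring

lemma dvd_ninetysix (p q : ℕ) (hp : 2 ≤ p) (hq : 2 ≤ q) :
    d p * d q ∣ 96 * d (p + q - 2) := by
  induction p, hp using Nat.le_induction with
  | base =>
      rw [d_two, show 2 + q - 2 = q by omega]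
  | succ p hp ih =>
      set r := p + q - 2 with hr
      have h1 : p + 1 + q - 2 = r + 1 := by omega
      rw [h1, dstep r, dstep p]
      have hf1 : Nat.factorial (p + 1) ^ 3 ∣ Nat.factorial (r + 1) ^ 3 :=
        pow_dvd_pow_of_dvd (Nat.factorial_dvd_factorial (by omega)) 3
      have hf2 : Nat.factorial (p + 2) ∣ Nat.factorial (r + 2) :=
        Nat.factorial_dvd_factorial (by omega)
      calc d p * Nat.factorial (p + 1) ^ 3 * Nat.factorial (p + 2) * d q
          = d p * d q * (Nat.factorial (p + 1) ^ 3 * Nat.factorial (p + 2)) := by ring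
        _ ∣ 96 * d r * (Nat.factorial (r + 1) ^ 3 * Nat.factorial (r + 2)) :=
            mul_dvd_mul ih (mul_dvd_mul hf1 hf2)
        _ = 96 * (d r * Nat.factorial (r + 1) ^ 3 * Nat.factorial (r + 2)) := by ring

lemma mono16 (a t : ℕ) (ha : 1 ≤ a) : d a * 16 ^ t ∣ d (a + t) := by
  induction t with
  | zero => simp
  | succ t ih =>
      have h16 : (16 : ℕ) ∣ Nat.factorial (a + t + 1) ^ 3 * Nat.factorial (a + t + 2) := by
        have h2 : (2 : ℕ) ∣ Nat.factorial (a + t + 1) := by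
          have := two_fac_dvd (a + t - 1)
          rwa [show a + t - 1 + 2 = a + t + 1 by omega] at this
        have h2' := two_fac_dvd (a + t)
        calc (16 : ℕ) = 2 ^ 3 * 2 := by norm_num
          _ ∣ Nat.factorial (a + t + 1) ^ 3 * Nat.factorial (a + t + 2) :=
              mul_dvd_mul (pow_dvd_pow_of_dvd h2 3) h2'
      calc d a * 16 ^ (t + 1) = d a * 16 ^ t * 16 := by ring
        _ ∣ d (a + t) * (Nat.factorial (a + t + 1) ^ 3 * Nat.factorial (a + t + 2)) :=
            mul_dvd_mul ih h16
        _ = d (a + t + 1) := by rw [dstep (a + t)]; ring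

lemma claimB {ι : Type*} (s : Finset ι) (f : ι → ℕ) (hf : ∀ i ∈ s, 1 ≤ f i)
    (hs : s.Nonempty) :
    ∏ i ∈ s, d (f i) ∣ 2 ^ (s.card - 1) * d (∑ i ∈ s, f i + 1 - s.card) := by
  classical
  induction s using Finset.cons_induction with
  | empty => simp at hs
  | cons a t h ih =>
      rw [Finset.prod_cons, Finset.sum_cons, Finset.card_cons]
      rcases t.eq_empty_or_nonempty with rfl | ht
      · simp
      · have hft : ∀ i ∈ t, 1 ≤ f i := fun i hi => hf i (Finset.mem_cons_of_mem hi)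
        have hcard : t.card ≤ ∑ i ∈ t, f i := by
          calc t.card = ∑ i ∈ t, 1 := by simp
            _ ≤ ∑ i ∈ t, f i := Finset.sum_le_sum hft
        have hc1 : 1 ≤ t.card := Finset.card_pos.mpr ht
        have hB := ih hft ht
        set e := ∑ i ∈ t, f i + 1 - t.card with he
        have hfa : 1 ≤ f a := hf a (Finset.mem_cons_self a t)
        have he1 : 1 ≤ e := by omega
        have htwo := dvd_two (f a) e hfa he1
        have harg : f a + e - 1 = f a + ∑ i ∈ t, f i + 1 - (t.card + 1) := by omega
        rw [harg] at htwo
        calc d (f a) * ∏ i ∈ t, d (f i)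
            ∣ d (f a) * (2 ^ (t.card - 1) * d e) := mul_dvd_mul_left _ hB
          _ = 2 ^ (t.card - 1) * (d (f a) * d e) := by ring
          _ ∣ 2 ^ (t.card - 1) * (2 * d (f a + ∑ i ∈ t, f i + 1 - (t.card + 1))) :=
              mul_dvd_mul_left _ htwo
          _ = 2 ^ (t.card - 1) * 2 * d (f a + ∑ i ∈ t, f i + 1 - (t.card + 1)) := by ring
          _ = 2 ^ (t.card + 1 - 1) * d (f a + ∑ i ∈ t, f i + 1 - (t.card + 1)) := by
              rw [show t.card + 1 - 1 = (t.card - 1) + 1 by omega, pow_succ]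

theorem hexagon_denominator_estimate (m k : ℕ) (hm : 2 ≤ m) (hk : 2 ≤ k)
    (n : Fin k → ℕ) (hsum : ∑ i, n i = 2 * m + 2)
    (hlow : ∀ i, 1 ≤ n i) (hhigh : ∀ i, n i ≤ 2 * m) :
    Nat.factorial k ^ 2 * ∏ i, d (n i) ∣
      Nat.factorial (2 * m + 2) ^ 2 * d (2 * m) := by
  have hksum : k ≤ 2 * m + 2 := by
    calc k = ∑ _i : Fin k, 1 := by simp
      _ ≤ ∑ i, n i := Finset.sum_le_sum (fun i _ => hlow i)
      _ = 2 * m + 2 := hsum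
  have h720 : (720 : ℕ) ∣ Nat.factorial (2 * m + 2) := by
    have := Nat.factorial_dvd_factorial (show 6 ≤ 2 * m + 2 by omega)
    simpa [Nat.factorial] using this
  have h720sq : (720 : ℕ) ^ 2 ∣ Nat.factorial (2 * m + 2) ^ 2 :=
    pow_dvd_pow_of_dvd h720 2
  rcases eq_or_lt_of_le hk with hk2 | hk3
  · -- k = 2
    subst hk2
    rw [Fin.sum_univ_two] at hsum
    rw [Fin.prod_univ_two]
    have h0 : 2 ≤ n 0 := by have := hhigh 1; have := hlow 1; omega
    have h1 : 2 ≤ n 1 := by have := hhigh 0; have := hlow 0; omega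
    have h96 := dvd_ninetysix (n 0) (n 1) h0 h1
    rw [show n 0 + n 1 - 2 = 2 * m by omega] at h96
    calc Nat.factorial 2 ^ 2 * (d (n 0) * d (n 1))
        ∣ Nat.factorial 2 ^ 2 * (96 * d (2 * m)) := mul_dvd_mul_left _ h96
      _ = 384 * d (2 * m) := by norm_num [Nat.factorial]; ring
      _ ∣ 720 ^ 2 * d (2 * m) := mul_dvd_mul_right (by norm_num) _
      _ ∣ Nat.factorial (2 * m + 2) ^ 2 * d (2 * m) := mul_dvd_mul_right h720sq _
  · -- k ≥ 3
    haveI : Nonempty (Fin k) := ⟨⟨0, by omega⟩⟩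
    have hB := claimB (Finset.univ : Finset (Fin k)) n (fun i _ => hlow i)
      Finset.univ_nonempty
    rw [Finset.card_univ, Fintype.card_fin, hsum] at hB
    have hkfac : Nat.factorial k ^ 2 ∣ Nat.factorial (2 * m + 2) ^ 2 :=
      pow_dvd_pow_of_dvd (Nat.factorial_dvd_factorial hksum) 2
    rcases eq_or_lt_of_le (show 3 ≤ k by omega) with hk3' | hk4
    · -- k = 3
      have hk3'' : k = 3 := by omega
      subst hk3''
      rw [show 2 * m + 2 + 1 - 3 = 2 * m by omega] at hB
      calc Nat.factorial 3 ^ 2 * ∏ i, d (n i)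
          ∣ Nat.factorial 3 ^ 2 * (2 ^ (3 - 1) * d (2 * m)) := mul_dvd_mul_left _ hB
        _ = 144 * d (2 * m) := by norm_num [Nat.factorial]; ring
        _ ∣ 720 ^ 2 * d (2 * m) := mul_dvd_mul_right (by norm_num) _
        _ ∣ Nat.factorial (2 * m + 2) ^ 2 * d (2 * m) := mul_dvd_mul_right h720sq _
    · -- k ≥ 4
      have hk4' : 4 ≤ k := by omega
      set e := 2 * m + 2 + 1 - k with he
      have he1 : 1 ≤ e := by omega
      have hm16 := mono16 e (k - 3) he1
      rw [show e + (k - 3) = 2 * m by omega] at hm16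
      have h2pow : (2 : ℕ) ^ (k - 1) ∣ 16 ^ (k - 3) := by
        have : (16 : ℕ) ^ (k - 3) = 2 ^ (4 * (k - 3)) := by
          rw [show (16 : ℕ) = 2 ^ 4 by norm_num, ← pow_mul]
        rw [this]
        exact pow_dvd_pow 2 (by omega)
      calc Nat.factorial k ^ 2 * ∏ i, d (n i)
          ∣ Nat.factorial k ^ 2 * (2 ^ (k - 1) * d e) := mul_dvd_mul_left _ hB
        _ ∣ Nat.factorial (2 * m + 2) ^ 2 * (16 ^ (k - 3) * d e) :=
            mul_dvd_mul hkfac (mul_dvd_mul_right h2pow _)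
        _ = Nat.factorial (2 * m + 2) ^ 2 * (d e * 16 ^ (k - 3)) := by ring
        _ ∣ Nat.factorial (2 * m + 2) ^ 2 * d (2 * m) := mul_dvd_mul_left _ hm16
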